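/- Let γ > 0, a, b > 0 and g(s) = exp(−a s log(1 + b s)) for s ≥ 0. Let λ be a Borel measure on ℝ^d with total mass λ(ℝ^d) ≤ 1 such that, for some K ≥ 0, λ(B(x,ρ)) ≤ K ρ^γ for all x ≠ 0 and all 0 < ρ < |x|/2. Then there is a constant C, depending only on a, b, γ, such that for every h > 0 and every x ∈ ℝ^d \ {0}, ∫ g(|x − y|/h) λ(dy) ≤ C ( K h^γ + g(|x|/(2h)) ). -/

import Mathlib

open MeasureTheory Metric Set
open scoped ENNReal


lemma gmono (a b : ℝ) (ha : 0 < a) (hb : 0 < b) {s1 s2 : ℝ} (h0 : 0 ≤ s1) (h12 : s1 ≤ s2) :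
    Real.exp (-(a * s2 * Real.log (1 + b * s2))) ≤ Real.exp (-(a * s1 * Real.log (1 + b * s1))) := by
  apply Real.exp_le_exp.2
  have h1 : (0:ℝ) < 1 + b * s1 := by nlinarith
  have h2 : Real.log (1 + b * s1) ≤ Real.log (1 + b * s2) := by
    apply Real.log_le_log h1; nlinarith
  have hl1 : 0 ≤ Real.log (1 + b * s1) := Real.log_nonneg (by nlinarith)
  have hl2 : 0 ≤ Real.log (1 + b * s2) := Real.log_nonneg (by nlinarith)
  have hkey : s1 * Real.log (1 + b * s1) ≤ s2 * Real.log (1 + b * s2) := by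
    nlinarith [mul_nonneg (sub_nonneg.2 h12) hl1, mul_nonneg (le_trans h0 h12) (sub_nonneg.2 h2)]
  have := mul_le_mul_of_nonneg_left hkey ha.le
  nlinarith

lemma gle1 (a b s : ℝ) (ha : 0 < a) (hb : 0 < b) (hs : 0 ≤ s) :
    Real.exp (-(a * s * Real.log (1 + b * s))) ≤ 1 := by
  apply Real.exp_le_one_iff.2
  have hl : 0 ≤ Real.log (1 + b * s) := Real.log_nonneg (by nlinarith)
  have : 0 ≤ a * s * Real.log (1 + b * s) := mul_nonneg (mul_nonneg ha.le hs) hl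
  linarith

lemma gpos (a b s : ℝ) : 0 < Real.exp (-(a * s * Real.log (1 + b * s))) := Real.exp_pos _

lemma gpoly (γ a b : ℝ) (hγ : 0 < γ) (ha : 0 < a) (hb : 0 < b) :
    ∃ c ≥ (1:ℝ), ∀ s > (0:ℝ),
      Real.exp (-(a * s * Real.log (1 + b * s))) * (s ^ γ * s ^ γ) ≤ c := by
  set s₀ : ℝ := (Real.exp (2*γ/a) - 1)/b with hs₀
  have hexp : (1:ℝ) < Real.exp (2*γ/a) := by
    calc (1:ℝ) = Real.exp 0 := Real.exp_zero.symm
    _ < Real.exp (2*γ/a) := Real.exp_lt_exp.2 (by positivity)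
  have hs₀pos : 0 < s₀ := div_pos (by linarith) hb
  refine ⟨max 1 (s₀ ^ γ * s₀ ^ γ), le_max_left _ _, fun s hs => ?_⟩
  rcases le_or_gt s s₀ with hcase | hcase
  · have h1 : Real.exp (-(a * s * Real.log (1 + b * s))) ≤ 1 := gle1 a b s ha hb hs.le
    have h2 : s ^ γ ≤ s₀ ^ γ := Real.rpow_le_rpow hs.le hcase hγ.le
    have h3 : 0 ≤ s ^ γ := Real.rpow_nonneg hs.le _
    calc Real.exp (-(a * s * Real.log (1 + b * s))) * (s ^ γ * s ^ γ)
        ≤ 1 * (s₀ ^ γ * s₀ ^ γ) := by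
          apply mul_le_mul h1 (mul_le_mul h2 h2 h3 (Real.rpow_nonneg hs₀pos.le _)) (by positivity) (by norm_num)
      _ ≤ max 1 (s₀ ^ γ * s₀ ^ γ) := by rw [one_mul]; exact le_max_right _ _
  · -- s > s₀ : exp bound
    have hlog : 2*γ/a ≤ Real.log (1 + b * s) := by
      have : Real.exp (2*γ/a) ≤ 1 + b * s := by
        have : b * s₀ < b * s := by nlinarith
        have hbs : b * s₀ = Real.exp (2*γ/a) - 1 := by
          rw [hs₀]; field_simp
        linarith
      calc 2*γ/a = Real.log (Real.exp (2*γ/a)) := (Real.log_exp _).symm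
      _ ≤ Real.log (1 + b * s) := Real.log_le_log (Real.exp_pos _) this
    have hkey : (γ + γ) * Real.log s ≤ a * s * Real.log (1 + b * s) := by
      have h1 : Real.log s ≤ s := Real.log_le_sub_one_of_pos hs |>.trans (by linarith)
      have h2 : 2*γ * s ≤ a * s * Real.log (1 + b * s) := by
        have := mul_le_mul_of_nonneg_left hlog (mul_nonneg ha.le (lt_trans hs₀pos hcase).le : 0 ≤ a * s)
        calc 2*γ*s = a * s * (2*γ/a) := by field_simp
        _ ≤ a * s * Real.log (1 + b * s) := this
      nlinarith
    have hrpow : s ^ γ * s ^ γ = Real.exp ((γ + γ) * Real.log s) := by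
      rw [← Real.rpow_add hs, Real.rpow_def_of_pos hs, mul_comm]
    calc Real.exp (-(a * s * Real.log (1 + b * s))) * (s ^ γ * s ^ γ)
        = Real.exp ((γ+γ) * Real.log s - a * s * Real.log (1 + b * s)) := by
          rw [hrpow, ← Real.exp_add]; ring_nf
      _ ≤ Real.exp 0 := Real.exp_le_exp.2 (by linarith)
      _ = 1 := Real.exp_zero
      _ ≤ _ := le_max_left _ _


-- helper: ((1/2)^n)^γ = ((1/2)^γ)^n
lemma half_pow_rpow (γ : ℝ) (n : ℕ) : (((1/2:ℝ))^n)^γ = ((1/2:ℝ)^γ)^n := by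
  rw [← Real.rpow_natCast ((1/2:ℝ)) n, ← Real.rpow_natCast ((1/2:ℝ)^γ) n,
    ← Real.rpow_mul (by norm_num), ← Real.rpow_mul (by norm_num), mul_comm]

lemma two_pow_rpow (γ : ℝ) (n : ℕ) : (((2:ℝ))^n)^γ = ((2:ℝ)^γ)^n := by
  rw [← Real.rpow_natCast ((2:ℝ)) n, ← Real.rpow_natCast ((2:ℝ)^γ) n,
    ← Real.rpow_mul (by norm_num), ← Real.rpow_mul (by norm_num), mul_comm]

lemma sumbound (γ a b : ℝ) (hγ : 0 < γ) (ha : 0 < a) (hb : 0 < b) :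
    ∃ M > (0:ℝ), ∀ t > (0:ℝ),
      ∑' k : ℕ, ENNReal.ofReal
        (Real.exp (-(a * (t*(1/2)^k) * Real.log (1 + b * (t*(1/2)^k)))) * (t*(1/2)^k) ^ γ)
        ≤ ENNReal.ofReal M := by
  obtain ⟨c, hc1, hc⟩ := gpoly γ a b hγ ha hb
  set q : ℝ := (1/2:ℝ)^γ with hq
  have hq0 : 0 < q := Real.rpow_pos_of_pos (by norm_num) _
  have hq1 : q < 1 := Real.rpow_lt_one (by norm_num) (by norm_num) hγ
  have hgeom : Summable (fun n : ℕ => q ^ n) := summable_geometric_of_lt_one hq0.le hq1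
  have hgeomsum : ∑' n : ℕ, q ^ n = (1 - q)⁻¹ := tsum_geometric_of_lt_one hq0.le hq1
  have hgeomle : ∀ s : Finset ℕ, ∑ i ∈ s, q ^ i ≤ (1 - q)⁻¹ := fun s => by
    rw [← hgeomsum]; exact hgeom.sum_le_tsum s (fun i _ => by positivity)
  refine ⟨(c+1) * (1-q)⁻¹, mul_pos (by linarith) (inv_pos.2 (by linarith)), fun t ht => ?_⟩
  set u : ℕ → ℝ := fun k =>
    Real.exp (-(a * (t*(1/2)^k) * Real.log (1 + b * (t*(1/2)^k)))) * (t*(1/2)^k) ^ γ with hu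
  have hupos : ∀ k, 0 ≤ u k := fun k => by
    have htk : (0:ℝ) ≤ t*(1/2)^k := mul_nonneg ht.le (by positivity)
    simp only [hu]
    exact mul_nonneg (Real.exp_pos _).le (Real.rpow_nonneg htk _)
  -- minimal m with t ≤ 2^m
  have hex : ∃ m : ℕ, t ≤ 2^m := by
    obtain ⟨m, hm⟩ := pow_unbounded_of_one_lt t (by norm_num : (1:ℝ) < 2)
    exact ⟨m, hm.le⟩
  set m := Nat.find hex with hm
  have hmle : t ≤ 2^m := Nat.find_spec hex
  set w : ℕ → ℝ := fun k => if k < m then c * q^(m-1-k) else q^(k-m) with hw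
  have huw : ∀ k, u k ≤ w k := by
    intro k
    have htk : (0:ℝ) < t*(1/2)^k := mul_pos ht (by positivity)
    by_cases hkm : k < m
    · -- u k ≤ c / t_k^γ ≤ c * q^(m-1-k)
      have hm1 : ¬ t ≤ 2^(m-1) := Nat.find_min hex (by omega)
      have htlb : (2:ℝ)^(m-1-k) ≤ t*(1/2)^k := by
        have h1 : (2:ℝ)^(m-1) < t := lt_of_not_ge hm1
        have h2 : (2:ℝ)^(m-1) = 2^(m-1-k) * 2^k := by rw [← pow_add]; congr 1; omega
        have h3 : (2:ℝ)^k * (1/2:ℝ)^k = 1 := by rw [← mul_pow]; norm_num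
        calc (2:ℝ)^(m-1-k) = 2^(m-1) * (1/2)^k := by rw [h2, mul_assoc, h3, mul_one]
        _ ≤ t * (1/2)^k := by apply mul_le_mul_of_nonneg_right h1.le (by positivity)
      have hrlb : ((2:ℝ)^γ)^(m-1-k) ≤ (t*(1/2)^k)^γ := by
        rw [← two_pow_rpow]; exact Real.rpow_le_rpow (by positivity) htlb hγ.le
      have hpos : (0:ℝ) < (t*(1/2)^k)^γ := Real.rpow_pos_of_pos htk _
      have hckey := hc (t*(1/2)^k) htk
      have h4 : u k * (t*(1/2)^k)^γ ≤ c := by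
        calc u k * (t*(1/2)^k)^γ
            = Real.exp (-(a * (t*(1/2)^k) * Real.log (1 + b * (t*(1/2)^k)))) *
              ((t*(1/2)^k)^γ * (t*(1/2)^k)^γ) := by rw [hu]; ring
        _ ≤ c := hckey
      have h5 : u k ≤ c / (t*(1/2)^k)^γ := by
        rw [le_div_iff₀ hpos]; exact h4
      have h6 : c / (t*(1/2)^k)^γ ≤ c / ((2:ℝ)^γ)^(m-1-k) := by
        apply div_le_div_of_nonneg_left (by linarith) (by positivity) hrlb
      have h7 : c / ((2:ℝ)^γ)^(m-1-k) = c * q^(m-1-k) := by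
        rw [hq, div_eq_mul_inv, ← inv_pow]
        congr 2
        rw [← Real.inv_rpow (by norm_num : (0:ℝ) ≤ 2)]
        norm_num
      rw [hw]; simp only [hkm, if_true]
      linarith [h6.trans_eq h7, h5]
    · -- u k ≤ t_k^γ ≤ q^(k-m)
      push_neg at hkm
      have hub : t*(1/2)^k ≤ (1/2:ℝ)^(k-m) := by
        have h2 : (1/2:ℝ)^k = (1/2)^m * (1/2)^(k-m) := by rw [← pow_add]; congr 1; omega
        have h3 : (2:ℝ)^m * (1/2:ℝ)^m = 1 := by rw [← mul_pow]; norm_num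
        calc t*(1/2)^k ≤ 2^m * (1/2)^k := by apply mul_le_mul_of_nonneg_right hmle (by positivity)
        _ = (1/2:ℝ)^(k-m) := by rw [h2, ← mul_assoc, h3, one_mul]
      have h1 : u k ≤ (t*(1/2)^k)^γ := by
        rw [hu]
        have := gle1 a b (t*(1/2)^k) ha hb htk.le
        calc Real.exp (-(a * (t*(1/2)^k) * Real.log (1 + b * (t*(1/2)^k)))) * (t*(1/2)^k) ^ γ
            ≤ 1 * (t*(1/2)^k) ^ γ := by
              apply mul_le_mul_of_nonneg_right this (by positivity)
        _ = (t*(1/2)^k) ^ γ := one_mul _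
      have h2 : (t*(1/2)^k)^γ ≤ q^(k-m) := by
        rw [hq, ← half_pow_rpow]
        exact Real.rpow_le_rpow htk.le hub hγ.le
      rw [hw]; simp only [Nat.not_lt.2 hkm, if_false]
      exact h1.trans h2
  -- partial sum bound
  have hwpos : ∀ k, 0 ≤ w k := fun k => by
    rw [hw]; dsimp only; split <;> positivity
  have hpartial : ∀ n, ∑ k ∈ Finset.range n, u k ≤ (c+1) * (1-q)⁻¹ := by
    intro n
    have h1 : ∑ k ∈ Finset.range n, u k ≤ ∑ k ∈ Finset.range n, w k :=
      Finset.sum_le_sum (fun k _ => huw k)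
    set N := max n m with hN
    have h2 : ∑ k ∈ Finset.range n, w k ≤ ∑ k ∈ Finset.range N, w k := by
      apply Finset.sum_le_sum_of_subset_of_nonneg
      · exact Finset.range_subset_range.2 (le_max_left _ _)
      · exact fun k _ _ => hwpos k
    have hmN : m ≤ N := le_max_right _ _
    have h3 : ∑ k ∈ Finset.range N, w k
        = ∑ k ∈ Finset.range m, w k + ∑ k ∈ Finset.Ico m N, w k := by
      rw [Finset.range_eq_Ico, ← Finset.sum_Ico_consecutive w (Nat.zero_le m) hmN,
        ← Finset.range_eq_Ico]
    have h4 : ∑ k ∈ Finset.range m, w k ≤ c * (1-q)⁻¹ := by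
      have he : ∀ k ∈ Finset.range m, w k = c * q^(m-1-k) := by
        intro k hk
        rw [hw]; simp only [Finset.mem_range.1 hk, if_true]
      rw [Finset.sum_congr rfl he, ← Finset.mul_sum]
      have : ∑ k ∈ Finset.range m, q^(m-1-k) = ∑ k ∈ Finset.range m, q^k :=
        Finset.sum_range_reflect (fun k => q^k) m
      rw [this]
      exact mul_le_mul_of_nonneg_left (hgeomle _) (by linarith)
    have h5 : ∑ k ∈ Finset.Ico m N, w k ≤ (1-q)⁻¹ := by
      have he : ∀ k ∈ Finset.Ico m N, w k = q^(k-m) := by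
        intro k hk
        rw [hw]; simp only [Nat.not_lt.2 (Finset.mem_Ico.1 hk).1, if_false]
      rw [Finset.sum_congr rfl he, Finset.sum_Ico_eq_sum_range]
      have : ∀ k ∈ Finset.range (N - m), q^(m+k-m) = q^k := by
        intro k _; congr 1; omega
      rw [Finset.sum_congr rfl this]
      exact hgeomle _
    calc ∑ k ∈ Finset.range n, u k ≤ ∑ k ∈ Finset.range N, w k := h1.trans h2
    _ = _ := h3
    _ ≤ c * (1-q)⁻¹ + (1-q)⁻¹ := add_le_add h4 h5
    _ = (c+1) * (1-q)⁻¹ := by ring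
  have hsummable : Summable u := summable_of_sum_range_le hupos hpartial
  have htsum : ∑' k, u k ≤ (c+1) * (1-q)⁻¹ := hsummable.tsum_le_of_sum_range_le hpartial
  calc ∑' k : ℕ, ENNReal.ofReal (u k) = ENNReal.ofReal (∑' k, u k) :=
      (ENNReal.ofReal_tsum_of_nonneg hupos hsummable).symm
  _ ≤ ENNReal.ofReal ((c+1) * (1-q)⁻¹) := ENNReal.ofReal_le_ofReal htsum



lemma ball_closure_bound {α : Type*} [MeasurableSpace α] [PseudoMetricSpace α]
    (lam : Measure α) (γ K : ℝ) (hγ : 0 < γ) (hK : 0 ≤ K) (x : α) (R : ℝ) (hR : 0 < R)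
    (H : ∀ ρ : ℝ, 0 < ρ → ρ < R → lam (ball x ρ) ≤ ENNReal.ofReal (K * ρ ^ γ)) :
    lam (ball x R) ≤ ENNReal.ofReal (K * R ^ γ) := by
  set ρ : ℕ → ℝ := fun n => R * ((n:ℝ)+1)/((n:ℝ)+2) with hρ
  have hρpos : ∀ n, 0 < ρ n := fun n => by
    apply div_pos (by positivity) (by positivity)
  have hρlt : ∀ n, ρ n < R := fun n => by
    rw [hρ, div_lt_iff₀ (by positivity)]
    nlinarith [hR]
  have hmono : Monotone ρ := by
    intro i j hij
    rw [hρ]; dsimp only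
    rw [div_le_div_iff₀ (by positivity) (by positivity)]
    have : (i:ℝ) ≤ j := Nat.cast_le.2 hij
    nlinarith [hR]
  have hunion : ball x R = ⋃ n, ball x (ρ n) := by
    ext y
    simp only [mem_ball, mem_iUnion]
    constructor
    · intro hy
      have hd : 0 ≤ dist y x := dist_nonneg
      obtain ⟨n, hn⟩ := exists_nat_gt (R / (R - dist y x))
      refine ⟨n, ?_⟩
      have h1 : 0 < R - dist y x := by linarith
      have h2 : R / (R - dist y x) < (n:ℝ) + 2 := by linarith [hn, Nat.cast_nonneg (α := ℝ) n]
      have h3 : R < ((n:ℝ)+2) * (R - dist y x) := by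
        rw [div_lt_iff₀ h1] at h2; linarith
      rw [hρ]; dsimp only
      rw [lt_div_iff₀ (by positivity)]
      nlinarith
    · rintro ⟨n, hn⟩
      exact hn.trans (hρlt n)
  have hdir : Directed (· ⊆ ·) (fun n => ball x (ρ n)) := fun i j =>
    ⟨max i j, ball_subset_ball (hmono (le_max_left i j)), ball_subset_ball (hmono (le_max_right i j))⟩
  rw [hunion, hdir.measure_iUnion]
  apply iSup_le
  intro n
  refine (H (ρ n) (hρpos n) (hρlt n)).trans (ENNReal.ofReal_le_ofReal ?_)
  exact mul_le_mul_of_nonneg_left (Real.rpow_le_rpow (hρpos n).le (hρlt n).le hγ.le) hK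

lemma singleton_null {α : Type*} [MeasurableSpace α] [PseudoMetricSpace α]
    (lam : Measure α) (γ K : ℝ) (hγ : 0 < γ) (x : α) (R : ℝ) (hR : 0 < R)
    (H : ∀ ρ : ℝ, 0 < ρ → ρ < R → lam (ball x ρ) ≤ ENNReal.ofReal (K * ρ ^ γ)) :
    lam {x} = 0 := by
  have hb : ∀ n : ℕ, lam {x} ≤ ENNReal.ofReal (K * (R/((n:ℝ)+2)) ^ γ) := by
    intro n
    have h1 : 0 < R/((n:ℝ)+2) := by positivity
    have h2 : R/((n:ℝ)+2) < R := by
      rw [div_lt_iff₀ (by positivity)]; nlinarith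
    refine le_trans (measure_mono ?_) (H _ h1 h2)
    simp [Set.singleton_subset_iff, mem_ball, h1]
  have htend : Filter.Tendsto (fun n : ℕ => ENNReal.ofReal (K * (R/((n:ℝ)+2)) ^ γ))
      Filter.atTop (nhds 0) := by
    have h1 : Filter.Tendsto (fun n : ℕ => R/((n:ℝ)+2)) Filter.atTop (nhds 0) :=
      Filter.Tendsto.div_atTop tendsto_const_nhds
        (Filter.tendsto_atTop_add_const_right _ 2 tendsto_natCast_atTop_atTop)
    have h2 : Filter.Tendsto (fun n : ℕ => (R/((n:ℝ)+2)) ^ γ) Filter.atTop (nhds 0) := by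
      have := h1.rpow_const (p := γ) (Or.inr hγ.le)
      rwa [Real.zero_rpow hγ.ne'] at this
    have h3 := h2.const_mul K
    rw [mul_zero] at h3
    have := ENNReal.tendsto_ofReal h3
    rwa [ENNReal.ofReal_zero] at this
  exact le_antisymm (ge_of_tendsto' htend hb) zero_le

set_option maxHeartbeats 2000000

/-- Let `g(s) = exp(−a s log(1+b s))` and let `λ` be a measure of total mass
at most `1` with `λ(B(x,ρ)) ≤ K ρ^γ` for `x ≠ 0`, `0 < ρ < |x|/2`. Then, with a constant `C`
depending only on `a, b, γ`, for every `h > 0` and `x ≠ 0`,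
`∫ g(|x−y|/h) λ(dy) ≤ C (K h^γ + g(|x|/(2h)))`. -/
theorem statement15 (γ a b : ℝ) (hγ : 0 < γ) (ha : 0 < a) (hb : 0 < b) :
    ∃ C > (0:ℝ), ∀ (d : ℕ) (lam : Measure (EuclideanSpace ℝ (Fin d))),
      lam Set.univ ≤ 1 →
      ∀ K : ℝ, 0 ≤ K →
      (∀ x : EuclideanSpace ℝ (Fin d), x ≠ 0 → ∀ ρ : ℝ, 0 < ρ → ρ < ‖x‖ / 2 →
        lam (ball x ρ) ≤ ENNReal.ofReal (K * ρ ^ γ)) →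
      ∀ h : ℝ, 0 < h → ∀ x : EuclideanSpace ℝ (Fin d), x ≠ 0 →
        (∫ y, Real.exp (-(a * (‖x - y‖ / h) * Real.log (1 + b * (‖x - y‖ / h)))) ∂lam) ≤
          C * (K * h ^ γ +
            Real.exp (-(a * (‖x‖ / (2*h)) * Real.log (1 + b * (‖x‖ / (2*h)))))) := by
  obtain ⟨M, hM, hMsum⟩ := sumbound γ a b hγ ha hb
  have h2γ : (0:ℝ) < (2:ℝ)^γ := Real.rpow_pos_of_pos (by norm_num) _
  refine ⟨(2:ℝ)^γ * M + 1, by positivity, ?_⟩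
  intro d lam hmass K hK hball h hh x hx
  set g : ℝ → ℝ := fun s => Real.exp (-(a * s * Real.log (1 + b * s))) with hgdef
  have hgpos : ∀ s, 0 < g s := fun s => Real.exp_pos _
  have hxnorm : (0:ℝ) < ‖x‖ := norm_pos_iff.2 hx
  set R : ℝ := ‖x‖ / 2 with hRdef
  have hR : 0 < R := by positivity
  set t : ℝ := R / (2*h) with htdef
  have ht : 0 < t := by positivity
  set ρ : ℕ → ℝ := fun k => R * (1/2)^k with hρdef
  have hρpos : ∀ k, 0 < ρ k := fun k => by positivity
  have hρR : ∀ k, ρ k ≤ R := fun k => by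
    rw [hρdef]; dsimp only
    calc R * (1/2:ℝ)^k ≤ R * 1 := by
          apply mul_le_mul_of_nonneg_left _ hR.le
          exact pow_le_one₀ (by norm_num) (by norm_num)
    _ = R := mul_one R
  have hρ2ht : ∀ k, ρ k = (2*h) * (t * (1/2)^k) := fun k => by
    rw [hρdef, htdef]; first | (field_simp; ring) | field_simp
  -- gfar
  set gfar : ℝ := Real.exp (-(a * (‖x‖ / (2*h)) * Real.log (1 + b * (‖x‖ / (2*h))))) with hgfar
  have hRh : R / h = ‖x‖ / (2*h) := by rw [hRdef]; first | (field_simp; ring) | field_simp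
  -- ball bounds up to radius R
  have hball2 : ∀ σ : ℝ, 0 < σ → σ ≤ R → lam (ball x σ) ≤ ENNReal.ofReal (K * σ ^ γ) := by
    intro σ h0 h1
    rcases lt_or_eq_of_le h1 with h2 | h2
    · exact hball x hx σ h0 h2
    · subst h2
      exact ball_closure_bound lam γ K hγ hK x R hR (fun τ hτ1 hτ2 => hball x hx τ hτ1 hτ2)
  have hxnull : lam {x} = 0 :=
    singleton_null lam γ K hγ x R hR (fun σ hσ1 hσ2 => hball x hx σ hσ1 hσ2)
  -- the integrand
  set f : EuclideanSpace ℝ (Fin d) → ℝ :=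
    fun y => Real.exp (-(a * (‖x - y‖ / h) * Real.log (1 + b * (‖x - y‖ / h)))) with hfdef
  have hfcont : Continuous f := by
    have h1 : Continuous (fun y : EuclideanSpace ℝ (Fin d) => ‖x - y‖ / h) :=
      (continuous_const.sub continuous_id).norm.div_const h
    have h2 : Continuous (fun y : EuclideanSpace ℝ (Fin d) => Real.log (1 + b * (‖x - y‖ / h))) := by
      apply Continuous.log (continuous_const.add (continuous_const.mul h1))
      intro y
      have : (0:ℝ) ≤ ‖x - y‖ / h := div_nonneg (norm_nonneg _) hh.le
      show 1 + b * (‖x - y‖ / h) ≠ 0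
      nlinarith
    exact Real.continuous_exp.comp (((continuous_const.mul h1).mul h2).neg)
  have hfnonneg : (0 : EuclideanSpace ℝ (Fin d) → ℝ) ≤ᵐ[lam] f := Filter.Eventually.of_forall (fun y => by
    show (0:ℝ) ≤ f y
    simp only [hfdef]
    exact (Real.exp_pos _).le)
  rw [show (∫ y, Real.exp (-(a * (‖x - y‖ / h) * Real.log (1 + b * (‖x - y‖ / h)))) ∂lam)
      = ∫ y, f y ∂lam from rfl,
    integral_eq_lintegral_of_nonneg_ae hfnonneg hfcont.aestronglyMeasurable]
  have hRHS0 : 0 ≤ ((2:ℝ)^γ * M + 1) * (K * h ^ γ + gfar) := by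
    have h1 : (0:ℝ) ≤ (2:ℝ)^γ * M + 1 := by nlinarith [mul_pos h2γ hM]
    have h2 : (0:ℝ) ≤ K * h ^ γ + gfar := by
      have h3 := mul_nonneg hK (Real.rpow_nonneg hh.le γ)
      have h4 : 0 < gfar := by rw [hgfar]; exact Real.exp_pos _
      linarith
    exact mul_nonneg h1 h2
  apply ENNReal.toReal_le_of_le_ofReal hRHS0
  -- the majorant
  set F : EuclideanSpace ℝ (Fin d) → ℝ≥0∞ := fun y =>
    ENNReal.ofReal gfar + ∑' k : ℕ,
      (ball x (ρ k)).indicator (fun _ => ENNReal.ofReal (g (t * (1/2)^k))) y with hFdef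
  have hae : ∀ᵐ y ∂lam, ENNReal.ofReal (f y) ≤ F y := by
    have hne : ∀ᵐ y ∂lam, y ≠ x := by
      rw [MeasureTheory.ae_iff]
      convert hxnull using 2
      ext y; simp
    filter_upwards [hne] with y hy
    rcases le_or_gt R ‖x - y‖ with hcase | hcase
    · -- far case
      have h1 : f y ≤ gfar := by
        rw [hfdef, hgfar, ← hRh]
        exact gmono a b ha hb (by positivity) (div_le_div_of_nonneg_right hcase hh.le)
      calc ENNReal.ofReal (f y) ≤ ENNReal.ofReal gfar := ENNReal.ofReal_le_ofReal h1
      _ ≤ F y := le_add_right (le_refl _)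
    · -- near case
      set r : ℝ := ‖x - y‖ with hrdef
      have hr : 0 < r := by
        rw [hrdef]; exact norm_pos_iff.2 (sub_ne_zero.2 (Ne.symm hy))
      have hexS : ∃ j : ℕ, R / r ≤ 2^(j+1) := by
        obtain ⟨n, hn⟩ := pow_unbounded_of_one_lt (R/r) (by norm_num : (1:ℝ) < 2)
        exact ⟨n, hn.le.trans (pow_le_pow_right₀ (by norm_num) (Nat.le_succ n))⟩
      set k := Nat.find hexS with hkdef
      have hupper : R / r ≤ 2^(k+1) := Nat.find_spec hexS
      have hlower : (2:ℝ)^k < R / r := by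
        rcases Nat.eq_zero_or_pos k with h0 | h0
        · rw [h0]; rw [pow_zero]
          exact (one_lt_div hr).2 hcase
        · have := Nat.find_min hexS (m := k - 1) (by omega)
          push_neg at this
          have hkk : k - 1 + 1 = k := by omega
          rwa [hkk] at this
      have hmem : y ∈ ball x (ρ k) := by
        rw [mem_ball, dist_comm, dist_eq_norm]
        have h1 : r * 2^k < R := by
          rw [lt_div_iff₀ hr] at hlower; linarith
        have h2 : (2:ℝ)^k * (1/2:ℝ)^k = 1 := by rw [← mul_pow]; norm_num
        rw [hρdef]
        show ‖x - y‖ < R * (1/2)^k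
        rw [← hrdef]
        nlinarith [pow_pos (show (0:ℝ) < 1/2 by norm_num) k, pow_pos (show (0:ℝ) < 2 by norm_num) k]
      have hle : t * (1/2)^k ≤ r / h := by
        have h1 : R ≤ 2^(k+1) * r := by
          rw [div_le_iff₀ hr] at hupper; linarith
        have h2 : (2:ℝ)^k * (1/2:ℝ)^k = 1 := by rw [← mul_pow]; norm_num
        have ht2 : t * (2*h) = R := by rw [htdef]; field_simp
        have h7 : (2:ℝ)^(k+1) * (1/2:ℝ)^k = 2 := by
          rw [pow_succ, mul_comm ((2:ℝ)^k) 2, mul_assoc, h2, mul_one]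
        have h6 : R * (1/2:ℝ)^k ≤ 2 * r := by
          nlinarith [mul_le_mul_of_nonneg_right h1 (show (0:ℝ) ≤ (1/2:ℝ)^k by positivity)]
        have h8 : t * (2*h) * (1/2:ℝ)^k = R * (1/2:ℝ)^k := by rw [ht2]
        rw [le_div_iff₀ hh]
        nlinarith [h8, h6]
      have h4 : f y ≤ g (t * (1/2)^k) := by
        rw [hfdef, hgdef]
        exact gmono a b ha hb (by positivity) hle
      calc ENNReal.ofReal (f y) ≤ ENNReal.ofReal (g (t * (1/2)^k)) := ENNReal.ofReal_le_ofReal h4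
      _ = (ball x (ρ k)).indicator (fun _ => ENNReal.ofReal (g (t * (1/2)^k))) y := by
          rw [Set.indicator_of_mem hmem]
      _ ≤ ∑' k : ℕ, (ball x (ρ k)).indicator (fun _ => ENNReal.ofReal (g (t * (1/2)^k))) y :=
          ENNReal.le_tsum k
      _ ≤ F y := self_le_add_left _ _
  have hlin : ∫⁻ y, ENNReal.ofReal (f y) ∂lam ≤ ∫⁻ y, F y ∂lam := lintegral_mono_ae hae
  have hFcalc : ∫⁻ y, F y ∂lam ≤
      ENNReal.ofReal gfar + ENNReal.ofReal (K * (2*h)^γ * M) := by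
    rw [hFdef]
    rw [lintegral_add_left measurable_const]
    apply add_le_add
    · rw [lintegral_const]
      calc ENNReal.ofReal gfar * lam univ ≤ ENNReal.ofReal gfar * 1 :=
            mul_le_mul_right hmass _
      _ = ENNReal.ofReal gfar := mul_one _
    · rw [lintegral_tsum (fun k => (measurable_const.indicator measurableSet_ball).aemeasurable)]
      have hterm : ∀ k : ℕ,
          (∫⁻ y, (ball x (ρ k)).indicator (fun _ => ENNReal.ofReal (g (t * (1/2)^k))) y ∂lam)
          ≤ ENNReal.ofReal (K * (2*h)^γ) * ENNReal.ofReal (g (t*(1/2)^k) * (t*(1/2)^k)^γ) := by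
        intro k
        rw [lintegral_indicator_const measurableSet_ball]
        calc ENNReal.ofReal (g (t * (1/2)^k)) * lam (ball x (ρ k))
            ≤ ENNReal.ofReal (g (t * (1/2)^k)) * ENNReal.ofReal (K * ρ k ^ γ) :=
              mul_le_mul_right (hball2 (ρ k) (hρpos k) (hρR k)) _
        _ = ENNReal.ofReal (g (t * (1/2)^k) * (K * ρ k ^ γ)) :=
              (ENNReal.ofReal_mul (hgpos _).le).symm
        _ = ENNReal.ofReal (K * (2*h)^γ) * ENNReal.ofReal (g (t*(1/2)^k) * (t*(1/2)^k)^γ) := by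
              rw [← ENNReal.ofReal_mul (by positivity)]
              congr 1
              rw [hρ2ht k, Real.mul_rpow (by positivity) (by positivity)]
              ring
      calc (∑' k : ℕ, ∫⁻ y, (ball x (ρ k)).indicator
              (fun _ => ENNReal.ofReal (g (t * (1/2)^k))) y ∂lam)
          ≤ ∑' k : ℕ, ENNReal.ofReal (K * (2*h)^γ) *
              ENNReal.ofReal (g (t*(1/2)^k) * (t*(1/2)^k)^γ) := ENNReal.tsum_le_tsum hterm
      _ = ENNReal.ofReal (K * (2*h)^γ) *
            ∑' k : ℕ, ENNReal.ofReal (g (t*(1/2)^k) * (t*(1/2)^k)^γ) := ENNReal.tsum_mul_left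
      _ ≤ ENNReal.ofReal (K * (2*h)^γ) * ENNReal.ofReal M := by
            apply mul_le_mul_right
            exact hMsum t ht
      _ = ENNReal.ofReal (K * (2*h)^γ * M) := by
            rw [← ENNReal.ofReal_mul (by positivity)]
  refine (hlin.trans hFcalc).trans ?_
  have hg0 : 0 ≤ gfar := by rw [hgfar]; exact (Real.exp_pos _).le
  have hhγ : 0 ≤ h ^ γ := Real.rpow_nonneg hh.le γ
  have h2h : (2*h)^γ = 2^γ * h^γ := Real.mul_rpow (by norm_num) hh.le
  rw [← ENNReal.ofReal_add hg0 (by positivity)]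
  apply ENNReal.ofReal_le_ofReal
  rw [h2h]
  nlinarith [mul_nonneg (mul_nonneg h2γ.le hM.le) hg0, mul_nonneg hK hhγ]
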